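/- Suppose R = Dic(A,y,x) is not isomorphic to Q₈ × C₂^ℓ for any ℓ. For any b ∈ A, the set X = {a ∈ A : a² ∈ {b, by}} has cardinality at most 2|A|/3. -/

import Mathlib

lemma zeta_add {R : Type*} [Group R] {c : R} (hc4 : c ^ 4 = 1) (i j : ZMod 4) :
    c ^ (i + j).val = c ^ i.val * c ^ j.val := by
  rw [ZMod.val_add, ← pow_add, ← pow_eq_pow_mod _ hc4]

lemma zeta_neg {R : Type*} [Group R] {c : R} (hc4 : c ^ 4 = 1) (i : ZMod 4) :
    c ^ (-i).val = (c ^ i.val)⁻¹ := by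
  apply eq_inv_of_mul_eq_one_left
  rw [← zeta_add hc4, neg_add_cancel]
  norm_num

lemma quat_hom {R : Type*} [Group R] (c x : R) (hc4 : c ^ 4 = 1)
    (hx2 : x ^ 2 = c ^ 2) (hconj : x⁻¹ * c * x = c⁻¹) :
    ∃ φ : QuaternionGroup 2 →* R,
      (∀ i : ZMod 4, φ (QuaternionGroup.a i) = c ^ i.val) ∧
      (∀ i : ZMod 4, φ (QuaternionGroup.xa i) = x * c ^ i.val) := by
  have hcx : ∀ i : ZMod 4, c ^ i.val * x = x * (c ^ i.val)⁻¹ := by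
    intro i
    have h1 : x⁻¹ * c ^ i.val * x = (c ^ i.val)⁻¹ := by
      have : ∀ k : ℕ, x⁻¹ * c ^ k * x = (c ^ k)⁻¹ := by
        intro k
        induction k with
        | zero => simp
        | succ k ih =>
          rw [pow_succ, mul_inv_rev, ← ih, ← hconj]
          group
      exact this i.val
    calc c ^ i.val * x = x * (x⁻¹ * c ^ i.val * x) := by group
    _ = x * (c ^ i.val)⁻¹ := by rw [h1]
  have key : ∀ i : ZMod 4, c ^ i.val * x = x * c ^ (-i).val := by
    intro i; rw [hcx, zeta_neg hc4]
  refine ⟨{ toFun := fun q => match q with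
            | QuaternionGroup.a i => c ^ i.val
            | QuaternionGroup.xa i => x * c ^ i.val,
            map_one' := ?_, map_mul' := ?_ }, fun i => rfl, fun i => rfl⟩
  · show c ^ (0 : ZMod 4).val = 1
    norm_num
  · rintro (i | i) (j | j)
    · show c ^ (i + j).val = c ^ i.val * c ^ j.val
      exact zeta_add hc4 i j
    · show x * c ^ (j - i).val = c ^ i.val * (x * c ^ j.val)
      rw [← mul_assoc, key, mul_assoc, ← zeta_add hc4]
      ring_nf
    · show x * c ^ (i + j).val = x * c ^ i.val * c ^ j.val
      rw [mul_assoc, ← zeta_add hc4]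
    · show c ^ ((2 : ZMod 4) + j - i).val = x * c ^ i.val * (x * c ^ j.val)
      have h2 : (2 : ZMod 4).val = 2 := rfl
      have e1 : (2 : ZMod 4) + j - i = 2 + (-i + j) := by ring
      have e2 : x * x = c ^ (2 : ZMod 4).val := by
        rw [h2, ← pow_two, hx2]
      rw [mul_assoc, ← mul_assoc (c ^ i.val), key, ← mul_assoc, ← mul_assoc, e2,
        mul_assoc, ← zeta_add hc4, e1, zeta_add hc4]


lemma fiber_ncard_le {G H : Type*} [Group G] [Group H] [Finite G] (f : G →* H) (t : H) :
    (f ⁻¹' {t}).ncard ≤ Nat.card f.ker := by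
  by_cases h : ∃ g, f g = t
  · obtain ⟨g, hg⟩ := h
    have : f ⁻¹' {t} = (g * ·) '' (f.ker : Set G) := by
      ext u
      simp only [Set.mem_preimage, Set.mem_singleton_iff, Set.mem_image, SetLike.mem_coe,
        MonoidHom.mem_ker]
      constructor
      · intro hu
        exact ⟨g⁻¹ * u, by rw [map_mul, map_inv, hg, hu, inv_mul_cancel], by group⟩
      · rintro ⟨k, hk, rfl⟩
        rw [map_mul, hk, hg, mul_one]
    rw [this, Set.ncard_image_of_injective _ (mul_right_injective g),
      ← Nat.card_coe_set_eq]
    rfl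
  · have : f ⁻¹' {t} = ∅ := by
      ext u; simp only [Set.mem_preimage, Set.mem_singleton_iff, Set.mem_empty_iff_false,
        iff_false]
      exact fun hu => h ⟨u, hu⟩
    simp [this]

lemma fiber_empty {G H : Type*} [Group G] [Group H] (f : G →* H) (t : H)
    (h : t ∉ f.range) : f ⁻¹' {t} = ∅ := by
  ext u
  simp only [Set.mem_preimage, Set.mem_singleton_iff, Set.mem_empty_iff_false, iff_false]
  exact fun hu => h ⟨u, hu⟩


lemma bad_case {R : Type*} [Group R] [Fintype R] (A : Subgroup R) (y x : R)
    (hAcomm : ∀ a ∈ A, ∀ b ∈ A, a * b = b * a)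
    (hy : y ∈ A) (hy2 : y ^ 2 = 1) (hy1 : y ≠ 1)
    (hx : x ∉ A) (hx2 : x ^ 2 = y)
    (hconj : ∀ a ∈ A, x⁻¹ * a * x = a⁻¹)
    (hAind : A.index = 2)
    (c : R) (hcA : c ∈ A) (hc2 : c ^ 2 = y)
    (hsq : ∀ a ∈ A, a ^ 2 = 1 ∨ a ^ 2 = y) :
    ∃ ℓ : ℕ, Nonempty (R ≃* QuaternionGroup 2 × Multiplicative (Fin ℓ → ZMod 2)) := by
  classical
  set K : Subgroup R :=
    { carrier := {a | a ∈ A ∧ a ^ 2 = 1}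
      one_mem' := ⟨A.one_mem, one_pow 2⟩
      mul_mem' := by
        rintro a b ⟨haA, ha⟩ ⟨hbA, hb⟩
        refine ⟨A.mul_mem haA hbA, ?_⟩
        have h0 : (a * b) ^ 2 = a ^ 2 * b ^ 2 := by
          rw [pow_two, pow_two, pow_two, mul_assoc, ← mul_assoc b a b,
            hAcomm b hbA a haA]
          group
        rw [h0, ha, hb, mul_one]
      inv_mem' := by
        rintro a ⟨haA, ha⟩
        exact ⟨A.inv_mem haA, by rw [inv_pow, ha, inv_one]⟩ } with hKdef
  have hKA : ∀ k : R, k ∈ K → k ∈ A := fun k hk => hk.1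
  have hK2 : ∀ k : R, k ∈ K → k ^ 2 = 1 := fun k hk => hk.2
  letI : CommGroup ↥K :=
    { (inferInstance : Group ↥K) with
      mul_comm := fun a b => Subtype.ext (hAcomm a.1 a.2.1 b.1 b.2.1) }
  letI : Module (ZMod 2) (Additive ↥K) := AddCommGroup.zmodModule (by
    intro k
    have h1 : Additive.toMul k * Additive.toMul k = 1 :=
      Subtype.ext (by rw [← pow_two]; exact hK2 _ (Additive.toMul k).2)
    rw [two_nsmul]
    exact Additive.toMul.injective h1)
  set yK : ↥K := ⟨y, hy, hy2⟩ with hyKdef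
  have hyK1 : yK ≠ 1 := fun h => hy1 (congrArg Subtype.val h)
  set ybar : Additive ↥K := Additive.ofMul yK with hybardef
  have hybar0 : ybar ≠ 0 := fun h => hyK1 (Additive.ofMul.injective h)
  obtain ⟨W, hW⟩ := (Submodule.span (ZMod 2) {ybar}).exists_isCompl
  set ℓ := Module.finrank (ZMod 2) ↥W with hldef
  set bW := Module.finBasis (ZMod 2) ↥W with hbWdef
  set eW : Multiplicative (Fin ℓ → ZMod 2) ≃* Multiplicative ↥W :=
    AddEquiv.toMultiplicative bW.equivFun.symm.toAddEquiv with heWdef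
  -- the map from W to R
  set g : ↥W → R := fun w => ((Additive.toMul (w : Additive ↥K) : ↥K) : R) with hgdef
  have hgK : ∀ w, g w ∈ K := fun w => (Additive.toMul (w : Additive ↥K)).2
  have hgA : ∀ w, g w ∈ A := fun w => hKA _ (hgK w)
  have hg2 : ∀ w, (g w) ^ 2 = 1 := fun w => hK2 _ (hgK w)
  have hginj : Function.Injective g := by
    intro u v huv
    exact Subtype.ext (Additive.toMul.injective (Subtype.ext huv))
  set ψ : Multiplicative ↥W →* R :=
    { toFun := fun w => g (Multiplicative.toAdd w)
      map_one' := rfl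
      map_mul' := fun _ _ => rfl } with hψdef
  have hc4 : c ^ 4 = 1 := by
    rw [show (4 : ℕ) = 2 * 2 from rfl, pow_mul, hc2, hy2]
  have hx2' : x ^ 2 = c ^ 2 := by rw [hc2, hx2]
  obtain ⟨φ, hφa, hφx⟩ := quat_hom c x hc4 hx2' (hconj c hcA)
  -- commutation
  have hcommK : ∀ r : R, r ∈ K → ∀ q : QuaternionGroup 2, Commute (φ q) r := by
    intro r hr q
    have hrx : r * x = x * r := by
      have h1 : x⁻¹ * r * x = r⁻¹ := hconj r (hKA r hr)
      have h2 : r⁻¹ = r := by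
        rw [inv_eq_iff_mul_eq_one, ← pow_two]; exact hK2 r hr
      rw [h2] at h1
      calc r * x = x * (x⁻¹ * r * x) := by group
        _ = x * r := by rw [h1]
    rcases q with i | i
    · rw [hφa]
      exact hAcomm _ (pow_mem hcA _) r (hKA r hr)
    · rw [hφx]
      show x * c ^ i.val * r = r * (x * c ^ i.val)
      rw [mul_assoc, hAcomm _ (pow_mem hcA _) r (hKA r hr), ← mul_assoc,
        ← mul_assoc, ← hrx]
  have hcomm : ∀ (q : QuaternionGroup 2) (v : Multiplicative (Fin ℓ → ZMod 2)),
      Commute (φ q) ((ψ.comp eW.toMonoidHom) v) :=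
    fun q v => (hcommK _ (hgK _) q).symm.symm
  set F : QuaternionGroup 2 × Multiplicative (Fin ℓ → ZMod 2) →* R :=
    φ.noncommCoprod (ψ.comp eW.toMonoidHom) hcomm with hFdef
  have hFval : ∀ (q : QuaternionGroup 2) (v : Multiplicative (Fin ℓ → ZMod 2)),
      F (q, v) = φ q * g (Multiplicative.toAdd (eW v)) := fun q v => rfl
  -- decomposition of K elements
  have hmemK : ∀ k : ↥K, ∃ (n : ℕ) (w : ↥W), (k : R) = c ^ n * g w := by
    intro k
    have hmem : Additive.ofMul k ∈ Submodule.span (ZMod 2) {ybar} ⊔ W := by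
      rw [hW.sup_eq_top]; trivial
    rw [Submodule.mem_sup] at hmem
    obtain ⟨u, hu, v, hv, huv⟩ := hmem
    rw [Submodule.mem_span_singleton] at hu
    obtain ⟨t, rfl⟩ := hu
    have ht : t = 0 ∨ t = 1 := by fin_cases t <;> [exact Or.inl rfl; exact Or.inr rfl]
    rcases ht with rfl | rfl
    · refine ⟨0, ⟨v, hv⟩, ?_⟩
      rw [zero_smul, zero_add] at huv
      rw [pow_zero, one_mul]
      show (k : R) = ((Additive.toMul v : ↥K) : R)
      rw [huv]
      rfl
    · refine ⟨2, ⟨v, hv⟩, ?_⟩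
      rw [one_smul] at huv
      have h6 := congrArg (fun z : Additive ↥K => ((Additive.toMul z : ↥K) : R)) huv
      rw [hc2]
      exact h6.symm
  -- decomposition of A elements
  have hdecA : ∀ a, a ∈ A → ∃ (n : ℕ) (w : ↥W), a = c ^ n * g w := by
    intro a ha
    rcases hsq a ha with h1 | h1
    · exact hmemK ⟨a, ha, h1⟩
    · have hca : c⁻¹ * a ∈ K := by
        refine ⟨A.mul_mem (A.inv_mem hcA) ha, ?_⟩
        have h7 : Commute c⁻¹ a := (hAcomm a ha c⁻¹ (A.inv_mem hcA)).symm
        rw [h7.mul_pow, inv_pow, hc2, h1, inv_mul_cancel]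
      obtain ⟨n, w, hw⟩ := hmemK ⟨c⁻¹ * a, hca⟩
      refine ⟨n + 1, w, ?_⟩
      have : (c⁻¹ * a : R) = c ^ n * g w := hw
      calc a = c * (c⁻¹ * a) := by group
        _ = c * (c ^ n * g w) := by rw [this]
        _ = c ^ (n + 1) * g w := by rw [pow_succ', mul_assoc]
  have hpowcast : ∀ n : ℕ, c ^ ((n : ZMod 4)).val = c ^ n := by
    intro n
    rw [ZMod.val_natCast, ← pow_eq_pow_mod _ hc4]
  -- surjectivity
  have hsurj : Function.Surjective F := by
    intro r
    by_cases hr : r ∈ A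
    · obtain ⟨n, w, hw⟩ := hdecA r hr
      refine ⟨(QuaternionGroup.a (n : ZMod 4), eW.symm (Multiplicative.ofAdd w)), ?_⟩
      rw [hFval, hφa, MulEquiv.apply_symm_apply, toAdd_ofAdd, hpowcast, ← hw]
    · have hxr : x⁻¹ * r ∈ A := by
        rw [Subgroup.mul_mem_iff_of_index_two hAind]
        simp only [inv_mem_iff]
        exact iff_of_false hx hr
      obtain ⟨n, w, hw⟩ := hdecA _ hxr
      refine ⟨(QuaternionGroup.xa (n : ZMod 4), eW.symm (Multiplicative.ofAdd w)), ?_⟩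
      rw [hFval, hφx, MulEquiv.apply_symm_apply, toAdd_ofAdd, hpowcast]
      show x * c ^ n * g w = r
      rw [mul_assoc, ← hw]
      group
  -- injectivity core
  have hcore : ∀ (i j : ZMod 4) (w w' : ↥W),
      c ^ i.val * g w = c ^ j.val * g w' → i = j ∧ w = w' := by
    intro i j w w' h
    have h2 : c ^ i.val = c ^ j.val * (g w' * (g w)⁻¹) := by
      rw [← mul_assoc, ← h, mul_assoc, mul_inv_cancel, mul_one]
    have hdK : g w' * (g w)⁻¹ ∈ K := K.mul_mem (hgK w') (K.inv_mem (hgK w))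
    have h3 : c ^ ((-j) + i).val = g w' * (g w)⁻¹ := by
      rw [zeta_add hc4, zeta_neg hc4, h2, ← mul_assoc, inv_mul_cancel, one_mul]
    have h4 : y ^ ((-j + i).val) = 1 := by
      have h5 : (c ^ ((-j) + i).val) ^ 2 = 1 := by rw [h3]; exact hK2 _ hdK
      rwa [← pow_mul, mul_comm, pow_mul, hc2] at h5
    have h5 : (-j + i).val = 0 ∨ (-j + i).val = 2 := by
      have hy_ord : orderOf y = 2 := orderOf_eq_prime hy2 hy1
      have hdvd : 2 ∣ (-j + i).val := hy_ord ▸ orderOf_dvd_of_pow_eq_one h4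
      have hlt : (-j + i).val < 4 := ZMod.val_lt _
      omega
    rcases h5 with h5 | h5
    · have h6 : -j + i = 0 := by rwa [ZMod.val_eq_zero] at h5
      have hij : i = j := by linear_combination h6
      have h7 : g w' * (g w)⁻¹ = 1 := by rw [← h3, h5, pow_zero]
      have h8 : g w' = g w := by
        rw [mul_inv_eq_one] at h7; exact h7
      exact ⟨hij, (hginj h8).symm⟩
    · exfalso
      have hyd : y = g w' * (g w)⁻¹ := by rw [← h3, h5, hc2]
      have hyKeq : yK = Additive.toMul (w' : Additive ↥K) *
          (Additive.toMul (w : Additive ↥K))⁻¹ := Subtype.ext hyd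
      have hmemW : ybar ∈ W := by
        have h9 : ybar = (w' : Additive ↥K) - (w : Additive ↥K) := by
          rw [hybardef, hyKeq, sub_eq_add_neg]; rfl
        rw [h9]
        exact W.sub_mem w'.2 w.2
      have h10 : ybar = 0 := (Submodule.mem_bot _).mp (hW.disjoint.le_bot
        ⟨Submodule.mem_span_singleton_self _, hmemW⟩)
      exact hybar0 h10
  have hinj : Function.Injective F := by
    rintro ⟨q1, v⟩ ⟨q2, v'⟩ hpq
    rw [hFval, hFval] at hpq
    set w := Multiplicative.toAdd (eW v) with hwdef
    set w' := Multiplicative.toAdd (eW v') with hw'def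
    have hvv' : w = w' → v = v' := by
      intro h
      have h1 := congrArg Multiplicative.ofAdd h
      rw [hwdef, hw'def, ofAdd_toAdd, ofAdd_toAdd] at h1
      exact eW.injective h1
    have hnotA : ∀ (i j : ZMod 4) (u u' : ↥W),
        x * c ^ i.val * g u ≠ c ^ j.val * g u' := by
      intro i j u u' hcontra
      apply hx
      have h1 : x * (c ^ i.val * g u) ∈ A := by
        rw [← mul_assoc, hcontra]
        exact A.mul_mem (pow_mem hcA _) (hgA u')
      have h2 : (c ^ i.val * g u) ∈ A := A.mul_mem (pow_mem hcA _) (hgA u)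
      have h3 := A.mul_mem h1 (A.inv_mem h2)
      rwa [mul_assoc, mul_inv_cancel, mul_one] at h3
    rcases q1 with i | i <;> rcases q2 with j | j
    · rw [hφa, hφa] at hpq
      obtain ⟨hij, hww⟩ := hcore i j w w' hpq
      exact Prod.ext (congrArg QuaternionGroup.a hij) (hvv' hww)
    · rw [hφa, hφx] at hpq
      exact absurd hpq.symm (hnotA j i w' w)
    · rw [hφx, hφa] at hpq
      exact absurd hpq (hnotA i j w w')
    · rw [hφx, hφx] at hpq
      rw [mul_assoc, mul_assoc] at hpq
      obtain ⟨hij, hww⟩ := hcore i j w w' (mul_left_cancel hpq)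
      exact Prod.ext (congrArg QuaternionGroup.xa hij) (hvv' hww)
  exact ⟨ℓ, ⟨(MulEquiv.ofBijective F ⟨hinj, hsurj⟩).symm⟩⟩


/-- If `R = Dic(A,y,x)` is not isomorphic to `Q₈ × C₂^ℓ` for any `ℓ`, then for
any `b ∈ A` the set `X = {a ∈ A : a² ∈ {b, by}}` has cardinality at most
`2|A|/3`. -/
theorem stmt6 {R : Type*} [Group R] [Fintype R] (A : Subgroup R) (y x : R)
    (hAcomm : ∀ a ∈ A, ∀ b ∈ A, a * b = b * a)
    (hexp : ∃ a ∈ A, a ^ 2 ≠ 1)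
    (hy : y ∈ A) (hy2 : y ^ 2 = 1) (hy1 : y ≠ 1)
    (hx : x ∉ A) (hx2 : x ^ 2 = y)
    (hconj : ∀ a ∈ A, x⁻¹ * a * x = a⁻¹)
    (hAind : A.index = 2)
    (hnotQ : ¬ ∃ ℓ : ℕ,
      Nonempty (R ≃* QuaternionGroup 2 × Multiplicative (Fin ℓ → ZMod 2)))
    (b : R) (hb : b ∈ A) :
    3 * Set.ncard {a : R | a ∈ A ∧ (a ^ 2 = b ∨ a ^ 2 = b * y)} ≤
      2 * Nat.card A := by
  classical
  set sq : ↥A →* ↥A :=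
    { toFun := fun a => a ^ 2
      map_one' := one_pow 2
      map_mul' := fun a b => Subtype.ext (by
        have h7 : Commute (a : R) (b : R) := hAcomm a a.2 b b.2
        push_cast
        exact h7.mul_pow 2) } with hsqdef
  have hsqval : ∀ a : ↥A, ((sq a : ↥A) : R) = (a : R) ^ 2 := fun a => by
    show ((a ^ 2 : ↥A) : R) = (a : R) ^ 2
    push_cast
    rfl
  set b' : ↥A := ⟨b, hb⟩ with hb'def
  set y' : ↥A := ⟨y, hy⟩ with hy'def
  set X : Set R := {a : R | a ∈ A ∧ (a ^ 2 = b ∨ a ^ 2 = b * y)} with hXdef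
  set X' : Set ↥A := sq ⁻¹' {b', b' * y'} with hX'def
  have hXimg : X = Subtype.val '' X' := by
    ext r
    constructor
    · rintro ⟨hrA, hr⟩
      refine ⟨⟨r, hrA⟩, ?_, rfl⟩
      show sq ⟨r, hrA⟩ ∈ ({b', b' * y'} : Set ↥A)
      rcases hr with hr | hr
      · exact Or.inl (Subtype.ext (by rw [hsqval]; exact hr))
      · exact Or.inr (Subtype.ext (by rw [hsqval]; push_cast; exact hr))
    · rintro ⟨a, ha, rfl⟩
      refine ⟨a.2, ?_⟩
      rcases ha with ha | ha
      · exact Or.inl (by rw [← hsqval, ha])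
      · exact Or.inr (by rw [← hsqval, ha]; push_cast; rfl)
  have hXcard : X.ncard = X'.ncard := by
    rw [hXimg, Set.ncard_image_of_injective _ Subtype.val_injective]
  have hXsplit : X' = sq ⁻¹' {b'} ∪ sq ⁻¹' {b' * y'} := by
    have h9 : ({b', b' * y'} : Set ↥A) = {b'} ∪ {b' * y'} := by
      ext z; simp; tauto
    rw [hX'def, h9, Set.preimage_union]
  set k := Nat.card sq.ker with hkdef
  set m := Nat.card sq.range with hmdef
  have hAcard : Nat.card ↥A = m * k := by
    have h9 := Subgroup.card_eq_card_quotient_mul_card_subgroup sq.ker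
    have h10 : Nat.card (↥A ⧸ sq.ker) = m :=
      Nat.card_congr (QuotientGroup.quotientKerEquivRange sq).toEquiv
    rw [h9, h10]
  have hk1 : 1 ≤ k := Nat.card_pos
  have hm2 : 2 ≤ m := by
    obtain ⟨a0, ha0, ha02⟩ := hexp
    have hne : sq.range ≠ ⊥ := by
      intro hbot
      have : sq ⟨a0, ha0⟩ ∈ sq.range := ⟨_, rfl⟩
      rw [hbot, Subgroup.mem_bot] at this
      have h11 := congrArg Subtype.val this
      rw [hsqval] at h11
      exact ha02 h11
    exact (Subgroup.one_lt_card_iff_ne_bot (H := sq.range)).mpr hne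
  have hfib1 : (sq ⁻¹' {b'}).ncard ≤ k := fiber_ncard_le sq b'
  have hfib2 : (sq ⁻¹' {b' * y'}).ncard ≤ k := fiber_ncard_le sq (b' * y')
  by_cases hm : 3 ≤ m
  · have h1 : X'.ncard ≤ 2 * k := by
      rw [hXsplit]
      have := Set.ncard_union_le (sq ⁻¹' {b'}) (sq ⁻¹' {b' * y'})
      omega
    rw [hXcard]
    rw [hAcard]
    nlinarith
  · have hmeq : m = 2 := by omega
    by_cases hyr : y' ∈ sq.range
    · exfalso
      apply hnotQ
      obtain ⟨c', hc'⟩ := hyr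
      have hy'2 : y' ^ 2 = 1 := Subtype.ext (by push_cast; exact hy2)
      have hy'1 : y' ≠ 1 := fun h => hy1 (congrArg Subtype.val h)
      have hordy' : orderOf y' = 2 := orderOf_eq_prime hy'2 hy'1
      have hrange : sq.range = Subgroup.zpowers y' := by
        refine (Subgroup.eq_of_le_of_card_ge (Subgroup.zpowers_le.mpr (show y' ∈ sq.range from ⟨c', hc'⟩)) ?_).symm
        rw [Nat.card_zpowers, hordy', ← hmdef, hmeq]
      have hy2z : y ^ (2 : ℤ) = 1 := by
        rw [show (2 : ℤ) = ((2 : ℕ) : ℤ) from rfl, zpow_natCast, hy2]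
      have hsq : ∀ a ∈ A, a ^ 2 = 1 ∨ a ^ 2 = y := by
        intro a ha
        have hmem : sq ⟨a, ha⟩ ∈ sq.range := ⟨_, rfl⟩
        rw [hrange] at hmem
        obtain ⟨n, hn⟩ := hmem
        have hval := congrArg Subtype.val hn
        rw [hsqval] at hval
        have hyzpow : ((y' ^ n : ↥A) : R) = y ^ n := by push_cast; rfl
        rw [hyzpow] at hval
        rcases Int.even_or_odd n with ⟨t, rfl⟩ | ⟨t, rfl⟩
        · left
          rw [← hval, show t + t = 2 * t by ring, zpow_mul, hy2z, one_zpow]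
        · right
          rw [← hval, zpow_add, zpow_one, zpow_mul, hy2z, one_zpow, one_mul]
      obtain ⟨c'', hc''A, hc''2⟩ : ∃ c'' ∈ A, c'' ^ 2 = y := by
        refine ⟨c'.1, c'.2, ?_⟩
        have h12 := congrArg Subtype.val hc'
        rwa [hsqval] at h12
      exact bad_case A y x hAcomm hy hy2 hy1 hx hx2 hconj hAind c'' hc''A hc''2 hsq
    · have hone : sq ⁻¹' {b'} = ∅ ∨ sq ⁻¹' {b' * y'} = ∅ := by
        by_cases hbr : b' ∈ sq.range
        · right
          refine fiber_empty _ _ fun hcontra => hyr ?_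
          have h8 := sq.range.mul_mem (sq.range.inv_mem hbr) hcontra
          rwa [inv_mul_cancel_left] at h8
        · left
          exact fiber_empty _ _ hbr
      have h1 : X'.ncard ≤ k := by
        rcases hone with hone | hone <;> rw [hXsplit, hone]
        · rw [Set.empty_union]; exact hfib2
        · rw [Set.union_empty]; exact hfib1
      rw [hXcard, hAcard, hmeq]
      omega
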